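/- arXiv:gr-qc/0306033 — 3 statements merged into one kernel-verified Lean document; each statement's English description precedes it below -/
import Mathlib

section
/- Let u ∈ ℝ³, ρ, ε ∈ ℝ, and define U_{μσ} = ∑_λ ε_{μσλ} u_λ and R_{μσαβ} = ρ ε U_{μσ} U_{αβ}. Then R has all the symmetry properties of the Riemann tensor: R_{μσαβ} = −R_{σμαβ}, R_{μσαβ} = −R_{μσβα}, R_{μσαβ} = R_{αβμσ}, and the first Bianchi (cyclic) identity R_{μσαβ} + R_{μαβσ} + R_{μβσα} = 0 holds for all indices. -/
open scoped BigOperators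

/-- The totally antisymmetric Levi-Civita symbol on three indices, with `ε 0 1 2 = 1`. -/
def leviCivita3 (i j k : Fin 3) : ℝ :=
  if (i, j, k) = (0, 1, 2) ∨ (i, j, k) = (1, 2, 0) ∨ (i, j, k) = (2, 0, 1) then 1
  else if (i, j, k) = (0, 2, 1) ∨ (i, j, k) = (2, 1, 0) ∨ (i, j, k) = (1, 0, 2) then -1
  else 0

/-- The skeleton-space Riemann tensor `R_{μσαβ} = ρ ε U_{μσ} U_{αβ}` of a parallel
bundle of bones has all the symmetry properties of the Riemann tensor, including the
first Bianchi (cyclic) identity. -/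
theorem skeleton_riemann_symmetries (u : EuclideanSpace ℝ (Fin 3)) (ρ ε : ℝ)
    (U : Fin 3 → Fin 3 → ℝ)
    (hU : ∀ μ σ : Fin 3, U μ σ = ∑ l : Fin 3, leviCivita3 μ σ l * u l)
    (R : Fin 3 → Fin 3 → Fin 3 → Fin 3 → ℝ)
    (hR : ∀ μ σ α β : Fin 3, R μ σ α β = ρ * ε * U μ σ * U α β) :
    (∀ μ σ α β : Fin 3, R μ σ α β = -R σ μ α β) ∧
    (∀ μ σ α β : Fin 3, R μ σ α β = -R μ σ β α) ∧
    (∀ μ σ α β : Fin 3, R μ σ α β = R α β μ σ) ∧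
    (∀ μ σ α β : Fin 3, R μ σ α β + R μ α β σ + R μ β σ α = 0) := by
  have hA : ∀ μ σ : Fin 3, U σ μ = -U μ σ := by
    intro μ σ
    fin_cases μ <;> fin_cases σ <;>
      simp [hU, Fin.sum_univ_three, leviCivita3]
  refine ⟨fun μ σ α β => ?_, fun μ σ α β => ?_, fun μ σ α β => ?_, fun μ σ α β => ?_⟩
  · rw [hR, hR, hA σ μ]; ring
  · rw [hR, hR, hA β α]; ring
  · rw [hR, hR]; ring
  · rw [hR, hR, hR]
    fin_cases μ <;> fin_cases σ <;> fin_cases α <;> fin_cases β <;>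
      simp [hU, Fin.sum_univ_three, leviCivita3] <;> ring
end

section
/- Let p range over a finite index set, let ε_p ∈ ℝ and u^p ∈ ℝ³ be constants, let ρ_p : ℝ³ → ℝ be differentiable at x ∈ ℝ³, and define U^p_{μν} = ∑_λ ε_{μνλ} u^p_λ and R_{αβλδ}(y) = ∑_p ε_p ρ_p(y) U^p_{αβ} U^p_{λδ}. Then for all indices α, β, λ, δ, γ ∈ {1,2,3}, the Bianchi combination satisfies ∂_γ R_{αβλδ}(x) + ∂_λ R_{αβδγ}(x) + ∂_δ R_{αβγλ}(x) = ε_{γλδ} ∑_p ε_p U^p_{αβ} (u^p · ∇ρ_p(x)), where ∂_μ denotes the partial derivative in the μ-th coordinate direction and u^p · ∇ρ_p(x) = ∑_ν u^p_ν ∂_ν ρ_p(x). -/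
open scoped BigOperators

/-- The partial derivative of `f : ℝ³ → ℝ` at `x` in the `ν`-th coordinate direction. -/
noncomputable def pderiv3 (ν : Fin 3) (f : EuclideanSpace ℝ (Fin 3) → ℝ)
    (x : EuclideanSpace ℝ (Fin 3)) : ℝ :=
  fderiv ℝ f x (EuclideanSpace.single ν 1)

set_option maxHeartbeats 1000000 in
lemma bianchi_aux (v D : Fin 3 → ℝ) (γ lam δ : Fin 3) :
    (∑ l : Fin 3, leviCivita3 lam δ l * v l) * D γ +
      (∑ l : Fin 3, leviCivita3 δ γ l * v l) * D lam +
      (∑ l : Fin 3, leviCivita3 γ lam l * v l) * D δ =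
      leviCivita3 γ lam δ * ∑ ν : Fin 3, v ν * D ν := by
  fin_cases γ <;> fin_cases lam <;> fin_cases δ <;>
    simp [leviCivita3, Fin.sum_univ_three, Prod.ext_iff] <;> ring

/-- For bundles of parallel bones with deficits `ε p`, directions `u p`, densities
`ρ p`, orientation tensors `U p` and approximate Riemann tensor
`R_{αβλδ}(y) = ∑ p, ε p ρ p y U^p_{αβ} U^p_{λδ}`, the Bianchi combination satisfies
`∂_γ R_{αβλδ} + ∂_λ R_{αβδγ} + ∂_δ R_{αβγλ} = ε_{γλδ} ∑ p, ε_p U^p_{αβ} (u^p · ∇ρ_p)`. -/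

theorem skeleton_bianchi_combination {ι : Type*} [Fintype ι]
    (ε : ι → ℝ) (u : ι → EuclideanSpace ℝ (Fin 3))
    (ρ : ι → EuclideanSpace ℝ (Fin 3) → ℝ) (x : EuclideanSpace ℝ (Fin 3))
    (hρ : ∀ p, DifferentiableAt ℝ (ρ p) x)
    (U : ι → Fin 3 → Fin 3 → ℝ)
    (hU : ∀ p, ∀ μ ν : Fin 3, U p μ ν = ∑ l : Fin 3, leviCivita3 μ ν l * u p l)
    (R : Fin 3 → Fin 3 → Fin 3 → Fin 3 → EuclideanSpace ℝ (Fin 3) → ℝ)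
    (hR : ∀ α β lam δ : Fin 3, ∀ y,
      R α β lam δ y = ∑ p, ε p * ρ p y * U p α β * U p lam δ) :
    ∀ α β lam δ γ : Fin 3,
      pderiv3 γ (R α β lam δ) x + pderiv3 lam (R α β δ γ) x +
          pderiv3 δ (R α β γ lam) x =
        leviCivita3 γ lam δ *
          ∑ p, ε p * U p α β * (∑ ν : Fin 3, u p ν * pderiv3 ν (ρ p) x) := by
  intro α β lam δ γ
  have hderiv : ∀ (m n ν : Fin 3),
      pderiv3 ν (R α β m n) x = ∑ p, (ε p * U p α β * U p m n) * pderiv3 ν (ρ p) x := by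
    intro m n ν
    have hfun : R α β m n = fun y => ∑ p, (ε p * U p α β * U p m n) * ρ p y := by
      funext y; rw [hR]; exact Finset.sum_congr rfl fun p _ => by ring
    rw [hfun]
    unfold pderiv3
    rw [fderiv_fun_sum (fun p _ => ((hρ p).const_mul _))]
    rw [ContinuousLinearMap.sum_apply]
    exact Finset.sum_congr rfl fun p _ => by
      rw [fderiv_const_mul (hρ p)]; rfl
  rw [hderiv, hderiv, hderiv, ← Finset.sum_add_distrib, ← Finset.sum_add_distrib,
    Finset.mul_sum]
  refine Finset.sum_congr rfl fun p _ => ?_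
  have key : ∀ (m n : Fin 3), U p m n = ∑ l : Fin 3, leviCivita3 m n l * u p l := hU p
  rw [key lam δ, key δ γ, key γ lam]
  have h := bianchi_aux (fun l => u p l) (fun ν => pderiv3 ν (ρ p) x) γ lam δ
  linear_combination (ε p * U p α β) * h
end

section
/- Let p range over a finite index set, ε_p ∈ ℝ, u^p ∈ ℝ³, ρ_p : ℝ³ → ℝ differentiable at x, U^p_{μν} = ∑_λ ε_{μνλ} u^p_λ, and R_{αβλδ}(y) = ∑_p ε_p ρ_p(y) U^p_{αβ} U^p_{λδ}. Suppose there is ϱ ∈ ℝ with u^p · ∇ρ_p(x) = ϱ for every p (each bundle's density changes along its direction at the common junction rate ϱ), and suppose ∑_p ε_p U^p_{αβ} = 0 for all α, β (the geometric closure relation of an oriented m-junction). Then the Bianchi combination vanishes: ∂_γ R_{αβλδ}(x) + ∂_λ R_{αβδγ}(x) + ∂_δ R_{αβγλ}(x) = 0 for all indices α, β, λ, δ, γ ∈ {1,2,3}. -/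
open scoped BigOperators

lemma pderiv3_sum {ι : Type*} [Fintype ι] (ν : Fin 3) (c : ι → ℝ)
    (f : ι → EuclideanSpace ℝ (Fin 3) → ℝ) (x : EuclideanSpace ℝ (Fin 3))
    (hf : ∀ p, DifferentiableAt ℝ (f p) x) :
    pderiv3 ν (fun y => ∑ p, c p * f p y) x = ∑ p, c p * pderiv3 ν (f p) x := by
  unfold pderiv3
  rw [fderiv_fun_sum (fun p _ => ((hf p).const_mul (c p)))]
  rw [ContinuousLinearMap.sum_apply]
  refine Finset.sum_congr rfl fun p _ => ?_
  rw [fderiv_const_mul (hf p) (c p)]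
  simp

lemma fin3_mk2 (h : 2 < 3) : (⟨2, h⟩ : Fin 3) = 2 := rfl

lemma eps_key (a d : Fin 3 → ℝ) (lam δ γ : Fin 3) :
    (∑ l, leviCivita3 lam δ l * a l) * d γ + (∑ l, leviCivita3 δ γ l * a l) * d lam +
      (∑ l, leviCivita3 γ lam l * a l) * d δ =
    leviCivita3 lam δ γ * ∑ l, a l * d l := by
  fin_cases lam <;> fin_cases δ <;> fin_cases γ <;>
    simp +decide [leviCivita3, Fin.sum_univ_three] <;> ring1

/-- If each bundle's density changes along its direction at the common junction rate `ϱ`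
(`u^p · ∇ρ_p(x) = ϱ`) and the geometric closure relation `∑ p, ε_p U^p_{αβ} = 0` of an
oriented m-junction holds, then the Bianchi combination of the skeleton-space Riemann
tensor vanishes. -/
theorem skeleton_bianchi_identity {ι : Type*} [Fintype ι]
    (ε : ι → ℝ) (u : ι → EuclideanSpace ℝ (Fin 3))
    (ρ : ι → EuclideanSpace ℝ (Fin 3) → ℝ) (x : EuclideanSpace ℝ (Fin 3))
    (hρ : ∀ p, DifferentiableAt ℝ (ρ p) x)
    (U : ι → Fin 3 → Fin 3 → ℝ)
    (hU : ∀ p, ∀ μ ν : Fin 3, U p μ ν = ∑ l : Fin 3, leviCivita3 μ ν l * u p l)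
    (R : Fin 3 → Fin 3 → Fin 3 → Fin 3 → EuclideanSpace ℝ (Fin 3) → ℝ)
    (hR : ∀ α β lam δ : Fin 3, ∀ y,
      R α β lam δ y = ∑ p, ε p * ρ p y * U p α β * U p lam δ)
    (ϱ : ℝ)
    (hflux : ∀ p, (∑ ν : Fin 3, u p ν * pderiv3 ν (ρ p) x) = ϱ)
    (hclosure : ∀ α β : Fin 3, ∑ p, ε p * U p α β = 0) :
    ∀ α β lam δ γ : Fin 3,
      pderiv3 γ (R α β lam δ) x + pderiv3 lam (R α β δ γ) x +
          pderiv3 δ (R α β γ lam) x = 0 := by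
  intro α β lam δ γ
  have h1 : ∀ l d g : Fin 3, pderiv3 g (R α β l d) x
      = ∑ p, (ε p * U p α β * U p l d) * pderiv3 g (ρ p) x := by
    intro l d g
    have hfun : R α β l d = fun y => ∑ p, (ε p * U p α β * U p l d) * ρ p y := by
      funext y; rw [hR]; exact Finset.sum_congr rfl fun p _ => by ring
    rw [hfun, pderiv3_sum _ _ _ _ hρ]
  rw [h1, h1, h1, ← Finset.sum_add_distrib, ← Finset.sum_add_distrib]
  have hcong : ∀ p ∈ Finset.univ (α := ι),
      (ε p * U p α β * U p lam δ) * pderiv3 γ (ρ p) x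
        + (ε p * U p α β * U p δ γ) * pderiv3 lam (ρ p) x
        + (ε p * U p α β * U p γ lam) * pderiv3 δ (ρ p) x
      = (leviCivita3 lam δ γ * ϱ) * (ε p * U p α β) := by
    intro p _
    have hk := eps_key (u p) (fun ν => pderiv3 ν (ρ p) x) lam δ γ
    simp only [] at hk
    rw [hU p lam δ, hU p δ γ, hU p γ lam]
    linear_combination (ε p * U p α β) * hk
      + (ε p * U p α β * leviCivita3 lam δ γ) * hflux p
  rw [Finset.sum_congr rfl hcong, ← Finset.mul_sum, hclosure, mul_zero]
end
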